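/- Let Ψ₁ ∈ C²((−1,1)) and let ε₀ ∈ (0,1] be such that Ψ₁″ is non-decreasing on [1−ε₀,1) and non-increasing on (−1,−1+ε₀]. Then for every ε ∈ (0,ε₀] and every s ∈ (−1,1): Ψ_{1,ε}(s) ≤ Ψ₁(s) + ε³/6. -/

import Mathlib

open Set

/-- The regularization `Ψ_{1,ε}` of a singular potential `Ψ₁ ∈ C²((-1,1))`,
built from `Ψ₁` and (functions representing) its first and second derivatives. -/
noncomputable def psi1eps (Ψ Ψ' Ψ'' : ℝ → ℝ) (ε s : ℝ) : ℝ :=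
  if 1 - ε ≤ s then
    Ψ (1 - ε) + Ψ' (1 - ε) * (s - (1 - ε)) + (1 / 2) * Ψ'' (1 - ε) * (s - (1 - ε)) ^ 2
      + (1 / 6) * (s - (1 - ε)) ^ 3
  else if s ≤ -1 + ε then
    Ψ (-1 + ε) + Ψ' (-1 + ε) * (s - (ε - 1)) + (1 / 2) * Ψ'' (-1 + ε) * (s - (ε - 1)) ^ 2
      + (1 / 6) * |s - (ε - 1)| ^ 3
  else Ψ s

lemma mono_aux (g g' : ℝ → ℝ) (a b : ℝ)
    (hd : ∀ x ∈ Icc a b, HasDerivAt g (g' x) x)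
    (hnn : ∀ x ∈ Icc a b, 0 ≤ g' x) : MonotoneOn g (Icc a b) := by
  apply monotoneOn_of_deriv_nonneg (convex_Icc a b)
  · exact fun x hx => (hd x hx).continuousAt.continuousWithinAt
  · intro x hx
    exact ((hd x (interior_subset hx)).differentiableAt).differentiableWithinAt
  · intro x hx
    rw [(hd x (interior_subset hx)).deriv]
    exact hnn x (interior_subset hx)

lemma anti_aux (g g' : ℝ → ℝ) (a b : ℝ)
    (hd : ∀ x ∈ Icc a b, HasDerivAt g (g' x) x)
    (hnp : ∀ x ∈ Icc a b, g' x ≤ 0) : AntitoneOn g (Icc a b) := by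
  apply antitoneOn_of_deriv_nonpos (convex_Icc a b)
  · exact fun x hx => (hd x hx).continuousAt.continuousWithinAt
  · intro x hx
    exact ((hd x (interior_subset hx)).differentiableAt).differentiableWithinAt
  · intro x hx
    rw [(hd x (interior_subset hx)).deriv]
    exact hnp x (interior_subset hx)

/-- Taylor lower bound to the right: if `f'' ≥ c` on `[a,b]` then
`f(b) ≥ f(a) + f'(a)(b-a) + c(b-a)²/2`. -/
lemma taylor_lb_right (f f' f'' : ℝ → ℝ) (a b c : ℝ) (hab : a ≤ b)
    (hd : ∀ x ∈ Icc a b, HasDerivAt f (f' x) x)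
    (hd2 : ∀ x ∈ Icc a b, HasDerivAt f' (f'' x) x)
    (hc : ∀ x ∈ Icc a b, c ≤ f'' x) :
    f a + f' a * (b - a) + c / 2 * (b - a) ^ 2 ≤ f b := by
  have haI : a ∈ Icc a b := ⟨le_refl a, hab⟩
  have hbI : b ∈ Icc a b := ⟨hab, le_refl b⟩
  -- h x = f' x - f' a - c * (x - a) is monotone on [a,b]
  have hhd : ∀ x ∈ Icc a b, HasDerivAt (fun x => f' x - f' a - c * (x - a)) (f'' x - c) x := by
    intro x hx
    have h1 : HasDerivAt (fun x : ℝ => c * (x - a)) c x := by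
      simpa using ((hasDerivAt_id x).sub_const a).const_mul c
    exact ((hd2 x hx).sub_const (f' a)).sub h1
  have hmono : MonotoneOn (fun x => f' x - f' a - c * (x - a)) (Icc a b) :=
    mono_aux _ _ a b hhd (fun x hx => by simpa using hc x hx)
  have hder : ∀ x ∈ Icc a b, f' a + c * (x - a) ≤ f' x := by
    intro x hx
    have := hmono haI hx hx.1
    simp only [sub_self, mul_zero, sub_zero] at this
    linarith
  -- g x = f x - f' a * (x - a) - c/2 * (x - a)^2 is monotone on [a,b]
  have hgd : ∀ x ∈ Icc a b,
      HasDerivAt (fun x => f x - f' a * (x - a) - c / 2 * (x - a) ^ 2)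
        (f' x - f' a - c * (x - a)) x := by
    intro x hx
    have h1 : HasDerivAt (fun x : ℝ => f' a * (x - a)) (f' a) x := by
      simpa using ((hasDerivAt_id x).sub_const a).const_mul (f' a)
    have h2 : HasDerivAt (fun x : ℝ => c / 2 * (x - a) ^ 2) (c * (x - a)) x := by
      have := (((hasDerivAt_id x).sub_const a).pow 2).const_mul (c / 2)
      refine this.congr_deriv ?_
      simp only [id]; ring
    exact ((hd x hx).sub h1).sub h2
  have hgmono : MonotoneOn (fun x => f x - f' a * (x - a) - c / 2 * (x - a) ^ 2) (Icc a b) :=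
    mono_aux _ _ a b hgd (fun x hx => by have := hder x hx; linarith)
  have := hgmono haI hbI hab
  simp only [sub_self, mul_zero, sub_zero, ne_eq, OfNat.ofNat_ne_zero, not_false_eq_true,
    zero_pow] at this
  nlinarith [this]

/-- Taylor lower bound to the left: if `f'' ≥ c` on `[b,a]` then
`f(b) ≥ f(a) + f'(a)(b-a) + c(b-a)²/2`. -/
lemma taylor_lb_left (f f' f'' : ℝ → ℝ) (a b c : ℝ) (hab : b ≤ a)
    (hd : ∀ x ∈ Icc b a, HasDerivAt f (f' x) x)
    (hd2 : ∀ x ∈ Icc b a, HasDerivAt f' (f'' x) x)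
    (hc : ∀ x ∈ Icc b a, c ≤ f'' x) :
    f a + f' a * (b - a) + c / 2 * (b - a) ^ 2 ≤ f b := by
  have haI : a ∈ Icc b a := ⟨hab, le_refl a⟩
  have hbI : b ∈ Icc b a := ⟨le_refl b, hab⟩
  have hhd : ∀ x ∈ Icc b a, HasDerivAt (fun x => f' x - f' a - c * (x - a)) (f'' x - c) x := by
    intro x hx
    have h1 : HasDerivAt (fun x : ℝ => c * (x - a)) c x := by
      simpa using ((hasDerivAt_id x).sub_const a).const_mul c
    exact ((hd2 x hx).sub_const (f' a)).sub h1
  have hmono : MonotoneOn (fun x => f' x - f' a - c * (x - a)) (Icc b a) :=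
    mono_aux _ _ b a hhd (fun x hx => by simpa using hc x hx)
  have hder : ∀ x ∈ Icc b a, f' x ≤ f' a + c * (x - a) := by
    intro x hx
    have := hmono hx haI hx.2
    simp only [sub_self, mul_zero, sub_zero] at this
    linarith
  have hgd : ∀ x ∈ Icc b a,
      HasDerivAt (fun x => f x - f' a * (x - a) - c / 2 * (x - a) ^ 2)
        (f' x - f' a - c * (x - a)) x := by
    intro x hx
    have h1 : HasDerivAt (fun x : ℝ => f' a * (x - a)) (f' a) x := by
      simpa using ((hasDerivAt_id x).sub_const a).const_mul (f' a)
    have h2 : HasDerivAt (fun x : ℝ => c / 2 * (x - a) ^ 2) (c * (x - a)) x := by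
      have := (((hasDerivAt_id x).sub_const a).pow 2).const_mul (c / 2)
      refine this.congr_deriv ?_
      simp only [id]; ring
    exact ((hd x hx).sub h1).sub h2
  have hganti : AntitoneOn (fun x => f x - f' a * (x - a) - c / 2 * (x - a) ^ 2) (Icc b a) :=
    anti_aux _ _ b a hgd (fun x hx => by have := hder x hx; linarith)
  have := hganti hbI haI hab
  simp only [sub_self, mul_zero, sub_zero, ne_eq, OfNat.ofNat_ne_zero, not_false_eq_true,
    zero_pow] at this
  nlinarith [this]

/-- If `Ψ₁″` is non-decreasing on `[1-ε₀,1)` and non-increasing on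
`(-1,-1+ε₀]`, then `Ψ_{1,ε}(s) ≤ Ψ₁(s) + ε³/6` for all `ε ∈ (0,ε₀]` and `s ∈ (-1,1)`. -/
theorem stmt_5
    (Ψ₁ Ψ₁' Ψ₁'' : ℝ → ℝ)
    (hΨd : ∀ s ∈ Ioo (-1 : ℝ) 1, HasDerivAt Ψ₁ (Ψ₁' s) s)
    (hΨd2 : ∀ s ∈ Ioo (-1 : ℝ) 1, HasDerivAt Ψ₁' (Ψ₁'' s) s)
    (hΨ''cont : ContinuousOn Ψ₁'' (Ioo (-1 : ℝ) 1))
    (ε₀ : ℝ) (hε₀ : ε₀ ∈ Ioc (0 : ℝ) 1)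
    (hmonoP : ∀ s t : ℝ, 1 - ε₀ ≤ s → s ≤ t → t < 1 → Ψ₁'' s ≤ Ψ₁'' t)
    (hmonoM : ∀ s t : ℝ, -1 < s → s ≤ t → t ≤ -1 + ε₀ → Ψ₁'' t ≤ Ψ₁'' s) :
    ∀ ε : ℝ, 0 < ε → ε ≤ ε₀ → ∀ s ∈ Ioo (-1 : ℝ) 1,
      psi1eps Ψ₁ Ψ₁' Ψ₁'' ε s ≤ Ψ₁ s + ε ^ 3 / 6 := by
  intro ε hε hεε₀ s hs
  obtain ⟨hs1, hs2⟩ := hs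
  have hε₀1 : ε₀ ≤ 1 := hε₀.2
  have hε1 : ε ≤ 1 := hεε₀.trans hε₀1
  unfold psi1eps
  split_ifs with h1 h2
  · -- right regularization region: 1 - ε ≤ s
    set a : ℝ := 1 - ε with ha
    have haI : a ∈ Icc a s := ⟨le_refl a, h1⟩
    have hsub : Icc a s ⊆ Ioo (-1 : ℝ) 1 := by
      intro x hx
      constructor <;> [linarith [hx.1]; linarith [hx.2]]
    have hc : ∀ x ∈ Icc a s, Ψ₁'' a ≤ Ψ₁'' x := by
      intro x hx
      exact hmonoP a x (by linarith) hx.1 (by linarith [hx.2])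
    have htay := taylor_lb_right Ψ₁ Ψ₁' Ψ₁'' a s (Ψ₁'' a) h1
      (fun x hx => hΨd x (hsub hx)) (fun x hx => hΨd2 x (hsub hx)) hc
    have hcube : (s - a) ^ 3 ≤ ε ^ 3 := by
      apply pow_le_pow_left₀ (by linarith) (by simp [ha]; linarith)
    clear_value a
    have e : (1:ℝ)/2 * Ψ₁'' a * (s-a)^2 = Ψ₁'' a / 2 * (s-a)^2 := by ring
    linarith [htay, hcube]
  · -- left regularization region: s ≤ -1 + ε
    set a : ℝ := -1 + ε with ha
    have hsa : s ≤ a := h2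
    have hsub : Icc s a ⊆ Ioo (-1 : ℝ) 1 := by
      intro x hx
      constructor <;> [linarith [hx.1]; linarith [hx.2]]
    have hc : ∀ x ∈ Icc s a, Ψ₁'' a ≤ Ψ₁'' x := by
      intro x hx
      exact hmonoM x a (by linarith [hx.1]) hx.2 (by linarith)
    have htay := taylor_lb_left Ψ₁ Ψ₁' Ψ₁'' a s (Ψ₁'' a) hsa
      (fun x hx => hΨd x (hsub hx)) (fun x hx => hΨd2 x (hsub hx)) hc
    have habs : |s - (ε - 1)| = a - s := by
      rw [abs_of_nonpos (by simp [ha]; linarith)]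
      simp [ha]; ring
    have hcube : (a - s) ^ 3 ≤ ε ^ 3 := by
      apply pow_le_pow_left₀ (by linarith) (by simp [ha]; linarith)
    rw [habs]
    have hsa' : s - (ε - 1) = s - a := by simp [ha]; ring
    rw [hsa']
    clear_value a
    have e : (1:ℝ)/2 * Ψ₁'' a * (s-a)^2 = Ψ₁'' a / 2 * (s-a)^2 := by ring
    linarith [htay, hcube]
  · -- middle region
    nlinarith [pow_pos hε 3]
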